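/- Suppose 4 divides N, c ∈ ℤ with gcd(c, N) = 1, α ∈ ℤ is odd, and t ≥ 1 is an integer. Then the exponential sum ∑_{x=0}^{2^t − 1} exp(2πi · α ((N/2) x² − c x) / 2^t) equals 0. -/

import Mathlib

lemma sum_range_two_mul_split (n : ℕ) (g : ℕ → ℂ) :
    ∑ x ∈ Finset.range (n + n), g x
      = ∑ x ∈ Finset.range n, g x + ∑ x ∈ Finset.range n, g (x + n) := by
  rw [Finset.sum_range_add]
  congr 1
  exact Finset.sum_congr rfl fun x _ => by rw [add_comm]

/-- For 4 ∣ N, gcd(c,N) = 1, α odd and t ≥ 1, the exponential sum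
∑_{x mod 2^t} e(α((N/2) x² − c x)/2^t) vanishes. -/
theorem exp_sum_vanishes_four_dvd (N c α : ℤ) (hN : (4 : ℤ) ∣ N)
    (hgcd : Int.gcd c N = 1) (hα : Odd α) (t : ℕ) (ht : 1 ≤ t) :
    ∑ x ∈ Finset.range (2 ^ t),
      Complex.exp (2 * Real.pi * Complex.I *
        ((α : ℂ) * (((N / 2 : ℤ) : ℂ) * (x : ℂ) ^ 2 - (c : ℂ) * (x : ℂ))) / ((2 : ℂ) ^ t)) = 0 := by
  obtain ⟨n, hn⟩ := hN
  have hc : Odd c := by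
    rcases Int.even_or_odd c with he | ho
    · exfalso
      have h2 : (2:ℤ) ∣ (Int.gcd c N : ℤ) := Int.dvd_coe_gcd he.two_dvd ⟨2*n, by omega⟩
      rw [hgcd] at h2; norm_num at h2
    · exact ho
  obtain ⟨k, hk⟩ := hα.mul hc
  obtain ⟨s, rfl⟩ : ∃ s, t = s + 1 := ⟨t - 1, by omega⟩
  have hhalf : (N / 2 : ℤ) = 2 * n := by omega
  have hkC : (α:ℂ) * (c:ℂ) = 2*(k:ℂ) + 1 := by exact_mod_cast hk
  have key : ∀ x : ℕ,
      Complex.exp (2 * Real.pi * Complex.I *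
        ((α : ℂ) * (((N / 2 : ℤ) : ℂ) * (((x + 2 ^ s : ℕ)) : ℂ) ^ 2 - (c : ℂ) * (((x + 2 ^ s : ℕ)) : ℂ))) / ((2 : ℂ) ^ (s+1)))
      = - Complex.exp (2 * Real.pi * Complex.I *
        ((α : ℂ) * (((N / 2 : ℤ) : ℂ) * (x : ℂ) ^ 2 - (c : ℂ) * (x : ℂ))) / ((2 : ℂ) ^ (s+1))) := by
    intro x
    have h2s : ((2:ℂ))^s ≠ 0 := pow_ne_zero _ two_ne_zero
    have hm : (2 * Real.pi * Complex.I *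
        ((α : ℂ) * (((N / 2 : ℤ) : ℂ) * (((x + 2 ^ s : ℕ)) : ℂ) ^ 2 - (c : ℂ) * (((x + 2 ^ s : ℕ)) : ℂ))) / ((2 : ℂ) ^ (s+1)))
        = (2 * Real.pi * Complex.I *
        ((α : ℂ) * (((N / 2 : ℤ) : ℂ) * (x : ℂ) ^ 2 - (c : ℂ) * (x : ℂ))) / ((2 : ℂ) ^ (s+1)))
          + ((2*α*n*(x:ℤ) + α*n*(2^s:ℤ) - k - 1 : ℤ):ℂ) * (2 * Real.pi * Complex.I)
          + Real.pi * Complex.I := by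
      rw [hhalf, pow_succ]
      push_cast
      field_simp
      linear_combination (-(2:ℂ) * (2:ℂ)^s) * hkC
    rw [hm, Complex.exp_add, Complex.exp_add, Complex.exp_int_mul_two_pi_mul_I,
      Complex.exp_pi_mul_I]
    ring
  have h2t : (2:ℕ) ^ (s+1) = 2^s + 2^s := by ring
  have hneg : ∑ x ∈ Finset.range (2^s),
      Complex.exp (2 * Real.pi * Complex.I *
        ((α : ℂ) * (((N / 2 : ℤ) : ℂ) * (((x + 2 ^ s : ℕ)) : ℂ) ^ 2 - (c : ℂ) * (((x + 2 ^ s : ℕ)) : ℂ))) / ((2 : ℂ) ^ (s+1)))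
      = - ∑ x ∈ Finset.range (2^s),
      Complex.exp (2 * Real.pi * Complex.I *
        ((α : ℂ) * (((N / 2 : ℤ) : ℂ) * (x : ℂ) ^ 2 - (c : ℂ) * (x : ℂ))) / ((2 : ℂ) ^ (s+1))) := by
    rw [Finset.sum_congr rfl (fun x _ => key x)]
    exact Finset.sum_neg_distrib _
  rw [h2t, sum_range_two_mul_split, hneg]
  ring
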